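/- Let X and Y be discrete random variables each taking values in [n] with joint distribution p(x,y) and p(X=i) > 0 for all i, and for i ∈ [n] let pᵢ denote the conditional distribution of Y given X = i. Then the minimum of the Shannon entropy H(E) over all causal models ({X,Y}, E, f, X→Y) with E independent of X, Y = f(X,E), inducing p(x,y), equals the minimum of the joint Shannon entropy H(U₁,…,Uₙ) over all joint distributions of random variables (U₁,…,Uₙ), each Uᵢ taking values in [n], whose marginals satisfy Uᵢ ~ pᵢ for every i; moreover both minima are attained. -/

import Mathlib

/-- Shannon entropy (base 2) of a finitely supported distribution. -/
noncomputable def shannonEntropy {α : Type*} [Fintype α] (q : α → ℝ) : ℝ :=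
  -∑ i, q i * Real.logb 2 (q i)

/-- `(pE, f)` is a causal model in direction `X → Y` for the joint distribution `p`:
`pE` is the distribution of a finite exogenous variable `E` independent of `X`,
and `Y = f(X, E)`, so that `p x y = P(X = x) · P(f(x, E) = y)`. -/
def IsCausalModel {α β γ : Type*} [Fintype α] [Fintype β] [Fintype γ] [DecidableEq β]
    (p : α → β → ℝ) (pE : γ → ℝ) (f : α → γ → β) : Prop :=
  (∀ e, 0 ≤ pE e) ∧ (∑ e, pE e = 1) ∧
    ∀ x y, p x y = (∑ y', p x y') * ∑ e, if f x e = y then pE e else 0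

/-- Entropy does not increase under a deterministic pushforward. -/
lemma pushforward_entropy_le {γ α : Type*} [Fintype γ] [Fintype α] [DecidableEq α]
    (pE : γ → ℝ) (hnn : ∀ e, 0 ≤ pE e) (g : γ → α) :
    shannonEntropy (fun u => ∑ e, if g e = u then pE e else 0) ≤ shannonEntropy pE := by
  set q : α → ℝ := fun u => ∑ e, if g e = u then pE e else 0 with hq
  have hqnn : ∀ u, 0 ≤ q u := fun u =>
    Finset.sum_nonneg fun e _ => by split <;> simp [hnn e]
  have hle : ∀ e, pE e ≤ q (g e) := by
    intro e
    have := Finset.single_le_sum (f := fun e' => if g e' = g e then pE e' else 0)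
      (fun e' _ => by split <;> simp [hnn e']) (Finset.mem_univ e)
    simpa using this
  have hrw : shannonEntropy q = -∑ e, pE e * Real.logb 2 (q (g e)) := by
    unfold shannonEntropy
    congr 1
    calc ∑ u, q u * Real.logb 2 (q u)
        = ∑ u, ∑ e, (if g e = u then pE e else 0) * Real.logb 2 (q u) := by
          refine Finset.sum_congr rfl fun u _ => ?_
          rw [hq]; rw [Finset.sum_mul]
      _ = ∑ e, ∑ u, (if g e = u then pE e else 0) * Real.logb 2 (q u) := Finset.sum_comm
      _ = ∑ e, pE e * Real.logb 2 (q (g e)) := by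
          refine Finset.sum_congr rfl fun e _ => ?_
          rw [Finset.sum_eq_single (g e)]
          · simp
          · intro u _ hu; simp [Ne.symm hu]
          · simp
  rw [hrw]
  unfold shannonEntropy
  have : ∑ e, pE e * Real.logb 2 (pE e) ≤ ∑ e, pE e * Real.logb 2 (q (g e)) := by
    refine Finset.sum_le_sum fun e _ => ?_
    rcases eq_or_lt_of_le (hnn e) with h0 | h0
    · simp [← h0]
    · exact mul_le_mul_of_nonneg_left
        (Real.logb_le_logb_of_le (by norm_num) h0 (hle e)) (hnn e)
  linarith

theorem min_entropy_causal_eq_min_entropy_coupling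
    (n : ℕ) (p : Fin n → Fin n → ℝ)
    (hnn : ∀ x y, 0 ≤ p x y) (hsum : ∑ x, ∑ y, p x y = 1)
    (hpos : ∀ x, 0 < ∑ y, p x y) :
    ∃ h : ℝ,
      IsLeast {h' : ℝ | ∃ (m : ℕ) (pE : Fin m → ℝ) (f : Fin n → Fin m → Fin n),
        IsCausalModel p pE f ∧ h' = shannonEntropy pE} h ∧
      IsLeast {h' : ℝ | ∃ q : (Fin n → Fin n) → ℝ,
        (∀ u, 0 ≤ q u) ∧ (∑ u, q u = 1) ∧
        (∀ i y, (∑ u, if u i = y then q u else 0) = p i y / (∑ y', p i y')) ∧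
        h' = shannonEntropy q} h := by
  classical
  set K : Set ((Fin n → Fin n) → ℝ) :=
    {q | (∀ u, 0 ≤ q u) ∧ (∑ u, q u = 1) ∧
      (∀ i y, (∑ u, if u i = y then q u else 0) = p i y / (∑ y', p i y'))} with hK
  -- K is nonempty: the product coupling
  have hKne : K.Nonempty := by
    set r : Fin n → Fin n → ℝ := fun i y => p i y / (∑ y', p i y') with hr
    have hrnn : ∀ i y, 0 ≤ r i y := fun i y => div_nonneg (hnn i y) (hpos i).le
    have hrsum : ∀ i, ∑ y, r i y = 1 := by
      intro i
      rw [hr]; simp only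
      rw [← Finset.sum_div, div_self (hpos i).ne']
    refine ⟨fun u => ∏ i, r i (u i), fun u => Finset.prod_nonneg fun i _ => hrnn i (u i),
      ?_, ?_⟩
    · rw [← Fintype.prod_sum (f := r)]
      simp [hrsum]
    · intro i y
      have key : ∀ u : Fin n → Fin n,
          (if u i = y then (∏ j, r j (u j)) else 0) =
          ∏ j, (if j = i then (fun z => if z = y then r i z else 0) else r j) (u j) := by
        intro u
        by_cases h : u i = y
        · simp only [h, if_true]
          refine Finset.prod_congr rfl fun j _ => ?_
          by_cases hj : j = i
          · subst hj; simp [h]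
          · simp [hj]
        · rw [if_neg h]
          symm
          apply Finset.prod_eq_zero (Finset.mem_univ i)
          simp [h]
      calc (∑ u : Fin n → Fin n, if u i = y then (∏ j, r j (u j)) else 0)
          = ∑ u : Fin n → Fin n,
              ∏ j, (if j = i then (fun z => if z = y then r i z else 0) else r j) (u j) := by
            exact Finset.sum_congr rfl fun u _ => key u
        _ = ∏ j, ∑ z, (if j = i then (fun z => if z = y then r i z else 0) else r j) z := by
            rw [Fintype.prod_sum]
        _ = r i y := by
            rw [Finset.prod_eq_single i]
            · simp
            · intro j _ hj; simp [hj, hrsum j]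
            · simp
  -- K is compact
  have hK_closed : IsClosed K := by
    have c1 : IsClosed {q : (Fin n → Fin n) → ℝ | ∀ u, 0 ≤ q u} := by
      have : {q : (Fin n → Fin n) → ℝ | ∀ u, 0 ≤ q u} =
          ⋂ u, {q : (Fin n → Fin n) → ℝ | 0 ≤ q u} := by
        ext q; simp [Set.mem_iInter]
      rw [this]
      exact isClosed_iInter fun u =>
        isClosed_le continuous_const (continuous_apply u)
    have c2 : IsClosed {q : (Fin n → Fin n) → ℝ | ∑ u, q u = 1} :=
      isClosed_eq (continuous_finset_sum _ fun u _ => continuous_apply u) continuous_const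
    have c3 : IsClosed {q : (Fin n → Fin n) → ℝ |
        ∀ i y, (∑ u, if u i = y then q u else 0) = p i y / (∑ y', p i y')} := by
      have : {q : (Fin n → Fin n) → ℝ |
          ∀ i y, (∑ u, if u i = y then q u else 0) = p i y / (∑ y', p i y')} =
          ⋂ i, ⋂ y, {q : (Fin n → Fin n) → ℝ |
            (∑ u, if u i = y then q u else 0) = p i y / (∑ y', p i y')} := by
        ext q; simp [Set.mem_iInter]
      rw [this]
      refine isClosed_iInter fun i => isClosed_iInter fun y => isClosed_eq ?_ continuous_const
      refine continuous_finset_sum _ fun u _ => ?_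
      split
      · exact continuous_apply u
      · exact continuous_const
    have : K = {q : (Fin n → Fin n) → ℝ | ∀ u, 0 ≤ q u} ∩
        ({q : (Fin n → Fin n) → ℝ | ∑ u, q u = 1} ∩ {q : (Fin n → Fin n) → ℝ |
          ∀ i y, (∑ u, if u i = y then q u else 0) = p i y / (∑ y', p i y')}) := rfl
    rw [this]
    exact c1.inter (c2.inter c3)
  have hK_sub : K ⊆ Set.Icc (0 : (Fin n → Fin n) → ℝ) 1 := by
    rintro q ⟨h1, h2, _⟩
    constructor
    · intro u; exact h1 u
    · intro u
      calc q u ≤ ∑ v, q v := Finset.single_le_sum (fun v _ => h1 v) (Finset.mem_univ u)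
        _ = 1 := h2
  have hK_cpt : IsCompact K := (isCompact_Icc).of_isClosed_subset hK_closed hK_sub
  -- entropy is continuous
  have hcont : Continuous (shannonEntropy : ((Fin n → Fin n) → ℝ) → ℝ) := by
    unfold shannonEntropy
    apply Continuous.neg
    apply continuous_finset_sum
    intro u _
    have h1 : Continuous fun x : ℝ => x * Real.logb 2 x := by
      have : (fun x : ℝ => x * Real.logb 2 x) = fun x => (x * Real.log x) / Real.log 2 := by
        funext x; rw [Real.logb]; ring
      rw [this]
      exact Real.continuous_mul_log.div_const _
    exact h1.comp (continuous_apply u)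
  obtain ⟨q0, hq0K, hq0min⟩ := hK_cpt.exists_isMinOn hKne hcont.continuousOn
  refine ⟨shannonEntropy q0, ⟨?_, ?_⟩, ⟨?_, ?_⟩⟩
  · -- membership in causal set: build causal model from q0 via an equiv
    obtain ⟨h1, h2, h3⟩ := hq0K
    set e := (Fintype.equivFin (Fin n → Fin n))
    refine ⟨Fintype.card (Fin n → Fin n), fun i => q0 (e.symm i),
      fun x i => e.symm i x, ⟨fun i => h1 _, ?_, ?_⟩, ?_⟩
    · rw [Equiv.sum_comp e.symm q0]; exact h2
    · intro x y
      have : (∑ i, if e.symm i x = y then q0 (e.symm i) else 0) =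
          ∑ u, if u x = y then q0 u else 0 :=
        Equiv.sum_comp e.symm (fun u => if u x = y then q0 u else 0)
      rw [this, h3 x y, mul_div_cancel₀ _ (hpos x).ne']
    · unfold shannonEntropy
      rw [Equiv.sum_comp e.symm (fun u => q0 u * Real.logb 2 (q0 u))]
  · -- lower bound on causal set
    rintro h' ⟨m, pE, f, ⟨he1, he2, he3⟩, rfl⟩
    set g : Fin m → (Fin n → Fin n) := fun e x => f x e with hg
    set q : (Fin n → Fin n) → ℝ := fun u => ∑ e, if g e = u then pE e else 0 with hqdef
    have hq_collapse : ∀ (φ : Fin m → Prop) [DecidablePred φ],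
        (∑ u : Fin n → Fin n, ∑ e, if φ e ∧ g e = u then pE e else 0) =
          ∑ e, if φ e then pE e else 0 := by
      intro φ _
      rw [Finset.sum_comm]
      refine Finset.sum_congr rfl fun e _ => ?_
      rw [Finset.sum_eq_single (g e)]
      · by_cases h : φ e <;> simp [h]
      · intro u _ hu
        simp only [ite_eq_right_iff]
        rintro ⟨_, h⟩; exact absurd h.symm hu
      · simp
    have hqK : q ∈ K := by
      refine ⟨fun u => Finset.sum_nonneg fun e _ => by split <;> simp [he1 e], ?_, ?_⟩
      · have hcol := hq_collapse (fun _ => True)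
        simp only [true_and, if_true] at hcol
        calc ∑ u, q u = ∑ e, pE e := hcol
          _ = 1 := he2
      · intro i y
        have hmarg : (∑ u : Fin n → Fin n, if u i = y then q u else 0) =
            ∑ e, if f i e = y then pE e else 0 := by
          have : (∑ u : Fin n → Fin n, if u i = y then q u else 0) =
              ∑ u : Fin n → Fin n, ∑ e, if f i e = y ∧ g e = u then pE e else 0 := by
            refine Finset.sum_congr rfl fun u _ => ?_
            by_cases h : u i = y
            · rw [if_pos h, hqdef]
              refine Finset.sum_congr rfl fun e _ => ?_
              by_cases h2 : g e = u
              · have hfe : f i e = y := by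
                  have hh : g e i = y := by rw [h2, h]
                  simpa [hg] using hh
                simp [h2, hfe]
              · simp [h2]
            · rw [if_neg h]
              symm
              refine Finset.sum_eq_zero fun e _ => if_neg ?_
              rintro ⟨hf, hge⟩
              apply h
              rw [← hge]
              exact hf
          rw [this, hq_collapse (fun e => f i e = y)]
        rw [hmarg, he3 i y, mul_div_cancel_left₀ _ (hpos i).ne']
    have h1 : shannonEntropy q0 ≤ shannonEntropy q := hq0min hqK
    have h2 : shannonEntropy q ≤ shannonEntropy pE := pushforward_entropy_le pE he1 g
    linarith
  · -- membership in coupling set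
    obtain ⟨h1, h2, h3⟩ := hq0K
    exact ⟨q0, h1, h2, h3, rfl⟩
  · -- lower bound on coupling set
    rintro h' ⟨q, hq1, hq2, hq3, rfl⟩
    exact hq0min (⟨hq1, hq2, hq3⟩ : q ∈ K)
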